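/- Run FISTA with step η = 1 and momentum β = (1−√α)/(1+√α), initialized at x_{−1} = x₀ = 0, on the over-regularized objective F_{2ρ} = f + g_B, and suppose R > 0 satisfies ‖y_k − x_B⋆‖₂ ≤ R for all k ≥ 0. If a vertex i satisfies x_{A,i}⋆ = 0 (coordinate i is inactive at the minimizer of problem (A)) and d_i ≥ (R/(αρ))², then FISTA never activates node i: x_{k,i} = 0 and y_{k,i} = 0 for all k ≥ 0. -/

import Mathlib

open Finset

noncomputable section

/-- Degree of vertex `i` in the (unweighted) graph with adjacency matrix `A`. -/
def deg {n : ℕ} (A : Matrix (Fin n) (Fin n) ℝ) (i : Fin n) : ℝ := ∑ j, A i j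

/-- The PageRank matrix `Q = αI + ((1−α)/2)·𝓛 = ((1+α)/2)·I − ((1−α)/2)·D^{-1/2} A D^{-1/2}`. -/
def Qmat {n : ℕ} (A : Matrix (Fin n) (Fin n) ℝ) (α : ℝ) : Matrix (Fin n) (Fin n) ℝ :=
  fun i j => (if i = j then (1 + α) / 2 else 0)
    - ((1 - α) / 2) * A i j / (Real.sqrt (deg A i) * Real.sqrt (deg A j))

/-- Smooth PageRank objective `f(x) = (1/2)⟨x, Qx⟩ − α⟨D^{-1/2} e_v, x⟩` with seed vertex `v`. -/
def fPR {n : ℕ} (A : Matrix (Fin n) (Fin n) ℝ) (α : ℝ) (v : Fin n) (x : Fin n → ℝ) : ℝ :=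
  (1 / 2) * (∑ i, x i * (Qmat A α).mulVec x i) - α * (x v / Real.sqrt (deg A v))

/-- Gradient of `fPR`: `∇f(x) = Qx − α·D^{-1/2} e_v`. -/
def gradf {n : ℕ} (A : Matrix (Fin n) (Fin n) ℝ) (α : ℝ) (v : Fin n) (x : Fin n → ℝ) :
    Fin n → ℝ :=
  fun i => (Qmat A α).mulVec x i - α * (if i = v then 1 / Real.sqrt (deg A v) else 0)

/-- Weighted ℓ1 norm `‖D^{1/2} x‖₁ = ∑ i, √(d i)·|x i|`. -/
def l1w {n : ℕ} (A : Matrix (Fin n) (Fin n) ℝ) (x : Fin n → ℝ) : ℝ :=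
  ∑ i, Real.sqrt (deg A i) * |x i|

/-- ℓ1-regularized PageRank objective `F_ρ(x) = f(x) + αρ‖D^{1/2}x‖₁`. -/
def Freg {n : ℕ} (A : Matrix (Fin n) (Fin n) ℝ) (α : ℝ) (v : Fin n) (ρ : ℝ)
    (x : Fin n → ℝ) : ℝ :=
  fPR A α v x + α * ρ * l1w A x

/-- Coordinatewise soft-thresholding at levels `t·√(d i)`: this is the proximal map
`prox_{ηg}` of `g(x) = cαρ‖D^{1/2}x‖₁` with `t = η·c·α·ρ`. -/
def softT {n : ℕ} (A : Matrix (Fin n) (Fin n) ℝ) (t : ℝ) (w : Fin n → ℝ) : Fin n → ℝ :=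
  fun i => Real.sign (w i) * max (|w i| - t * Real.sqrt (deg A i)) 0

/-- Euclidean norm on `Fin n → ℝ`. -/
def enorm2 {n : ℕ} (x : Fin n → ℝ) : ℝ := Real.sqrt (∑ i, (x i) ^ 2)

open Classical in
/-- Degree-weighted volume of a vertex set: `vol(S) = ∑_{i ∈ S} d i`. -/
def volS {n : ℕ} (A : Matrix (Fin n) (Fin n) ℝ) (S : Set (Fin n)) : ℝ :=
  ∑ i ∈ Finset.univ.filter (fun i => i ∈ S), deg A i

/-- Neighbor set of a vertex. -/
def nbr {n : ℕ} (A : Matrix (Fin n) (Fin n) ℝ) (i : Fin n) : Set (Fin n) := {j | A i j ≠ 0}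

/-- Vertex boundary of `S`: vertices outside `S` with a neighbor in `S`. -/
def bdry {n : ℕ} (A : Matrix (Fin n) (Fin n) ℝ) (S : Set (Fin n)) : Set (Fin n) :=
  {j | j ∉ S ∧ ∃ i ∈ S, A j i ≠ 0}

/-- `A` is the adjacency matrix of a finite undirected unweighted loopless graph
with all degrees positive. -/
structure IsGraph {n : ℕ} (A : Matrix (Fin n) (Fin n) ℝ) : Prop where
  symm : ∀ i j, A i j = A j i
  zero_one : ∀ i j, A i j = 0 ∨ A i j = 1
  loopless : ∀ i, A i i = 0
  deg_pos : ∀ i, 0 < deg A i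

lemma Qmat_symm {n : ℕ} {A : Matrix (Fin n) (Fin n) ℝ} (hG : IsGraph A) (α : ℝ) (a b : Fin n) :
    Qmat A α a b = Qmat A α b a := by
  unfold Qmat
  rw [hG.symm a b]
  rw [show ((if a = b then (1 + α) / 2 else 0) : ℝ) = (if b = a then (1 + α) / 2 else 0) by simp [eq_comm]]
  ring

lemma quad_expand {n : ℕ} {A : Matrix (Fin n) (Fin n) ℝ} (hG : IsGraph A) (α : ℝ)
    (x : Fin n → ℝ) (i : Fin n) (t : ℝ) :
    ∑ k, (x k + if k = i then t else 0) *
        (Qmat A α).mulVec (fun j => x j + if j = i then t else 0) k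
      = ∑ k, x k * (Qmat A α).mulVec x k + 2 * t * (Qmat A α).mulVec x i
        + t ^ 2 * Qmat A α i i := by
  set Q := Qmat A α with hQ
  have h1 : ∀ k, Q.mulVec (fun j => x j + if j = i then t else 0) k
      = Q.mulVec x k + Q k i * t := by
    intro k
    simp only [Matrix.mulVec, dotProduct, mul_add, Finset.sum_add_distrib, mul_ite,
      mul_zero, Finset.sum_ite_eq' univ, Finset.mem_univ, if_true]
  have hsym : ∑ k, x k * Q k i = Q.mulVec x i := by
    simp only [Matrix.mulVec, dotProduct]
    apply Finset.sum_congr rfl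
    intro k _
    rw [hQ, Qmat_symm hG α i k]
    ring
  calc ∑ k, (x k + if k = i then t else 0) * Q.mulVec (fun j => x j + if j = i then t else 0) k
      = ∑ k, ((x k * Q.mulVec x k + (x k * Q k i) * t)
          + (if k = i then t * (Q.mulVec x k + Q k i * t) else 0)) := by
        apply Finset.sum_congr rfl
        intro k _
        rw [h1 k]
        by_cases h : k = i <;> simp [h] <;> ring
    _ = ∑ k, x k * Q.mulVec x k + 2 * t * Q.mulVec x i + t ^ 2 * Q i i := by
        rw [Finset.sum_add_distrib, Finset.sum_add_distrib, ← Finset.sum_mul, hsym,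
          Finset.sum_ite_eq' univ i]
        simp
        ring

lemma fPR_update {n : ℕ} {A : Matrix (Fin n) (Fin n) ℝ} (hG : IsGraph A) (α : ℝ) (v : Fin n)
    (x : Fin n → ℝ) (i : Fin n) (t : ℝ) :
    fPR A α v (fun j => x j + if j = i then t else 0)
      = fPR A α v x + t * gradf A α v x i + t ^ 2 * Qmat A α i i / 2 := by
  unfold fPR gradf
  rw [quad_expand hG α x i t]
  by_cases h : i = v
  · simp [h]; ring
  · simp [h, Ne.symm h]; ring

lemma l1w_update {n : ℕ} (A : Matrix (Fin n) (Fin n) ℝ) (x : Fin n → ℝ) (i : Fin n)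
    (hx : x i = 0) (t : ℝ) (ht : 0 ≤ t) :
    l1w A (fun j => x j + if j = i then t else 0) = l1w A x + Real.sqrt (deg A i) * t := by
  have key : ∀ j, Real.sqrt (deg A j) * |x j + if j = i then t else 0|
      = Real.sqrt (deg A j) * |x j| + (if j = i then Real.sqrt (deg A i) * t else 0) := by
    intro j
    by_cases h : j = i
    · subst h; simp [hx, abs_of_nonneg ht]
    · simp [h]
  unfold l1w
  simp only [key, Finset.sum_add_distrib, Finset.sum_ite_eq' univ, Finset.mem_univ, if_true]

lemma Qmat_diag {n : ℕ} {A : Matrix (Fin n) (Fin n) ℝ} (hG : IsGraph A) (α : ℝ) (i : Fin n) :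
    Qmat A α i i = (1 + α) / 2 := by
  simp [Qmat, hG.loopless i]

/-- subgradient lower bound at an inactive coordinate of a minimizer -/
lemma grad_lower {n : ℕ} {A : Matrix (Fin n) (Fin n) ℝ} (hG : IsGraph A)
    {α ρ : ℝ} (hα : 0 < α) (v : Fin n) {xA : Fin n → ℝ}
    (hmin : ∀ z, fPR A α v xA + α * ρ * l1w A xA ≤ fPR A α v z + α * ρ * l1w A z)
    {i : Fin n} (hiA : xA i = 0) :
    -(α * ρ * Real.sqrt (deg A i)) ≤ gradf A α v xA i := by
  by_contra hcon
  push_neg at hcon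
  have hqpos : (0:ℝ) < (1 + α) / 2 := by linarith
  set g := gradf A α v xA i with hg
  set a := α * ρ * Real.sqrt (deg A i) with ha
  set t : ℝ := -(g + a) / ((1 + α) / 2) with htdef
  have htpos : 0 < t := by
    apply div_pos _ hqpos
    linarith
  have h1 := hmin (fun j => xA j + if j = i then t else 0)
  rw [fPR_update hG α v xA i t, l1w_update A xA i hiA t htpos.le, Qmat_diag hG α i] at h1
  have h2 : 0 ≤ t * g + t ^ 2 * ((1 + α) / 2) / 2 + α * ρ * (Real.sqrt (deg A i) * t) := by
    rw [hg]; linarith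
  have h4 : t * ((1 + α) / 2) = -(g + a) := by
    rw [htdef]; field_simp
  have h5 : 0 ≤ t * ((g + a) + t * ((1 + α) / 2) / 2) := by
    rw [ha]; nlinarith [h2]
  rw [h4] at h5
  nlinarith [htpos, h5, hcon]

lemma one_le_deg {n : ℕ} {A : Matrix (Fin n) (Fin n) ℝ} (hG : IsGraph A) (j : Fin n) :
    1 ≤ deg A j := by
  have hpos := hG.deg_pos j
  unfold deg at *
  by_contra h
  push_neg at h
  have : ∀ k, A j k = 0 := by
    intro k
    rcases hG.zero_one j k with h0 | h1
    · exact h0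
    · exfalso
      have hle : (1:ℝ) ≤ ∑ k, A j k := by
        rw [← h1]
        apply Finset.single_le_sum (f := fun k => A j k) _ (Finset.mem_univ k)
        intro m _
        rcases hG.zero_one j m with h0 | h0 <;> simp [h0]
      linarith
  simp [this] at hpos

lemma A_nonneg {n : ℕ} {A : Matrix (Fin n) (Fin n) ℝ} (hG : IsGraph A) (a b : Fin n) :
    0 ≤ A a b := by
  rcases hG.zero_one a b with h | h <;> simp [h]

lemma Q_offdiag_nonpos {n : ℕ} {A : Matrix (Fin n) (Fin n) ℝ} (hG : IsGraph A)
    {α : ℝ} (hα1 : α ≤ 1) {a b : Fin n} (h : a ≠ b) : Qmat A α a b ≤ 0 := by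
  unfold Qmat
  rw [if_neg h]
  have h1 : 0 ≤ Real.sqrt (deg A a) * Real.sqrt (deg A b) :=
    mul_nonneg (Real.sqrt_nonneg _) (Real.sqrt_nonneg _)
  have h2 : 0 ≤ (1 - α) / 2 * A a b := by
    apply mul_nonneg (by linarith) (A_nonneg hG a b)
  have := div_nonneg h2 h1
  linarith

/-- row ℓ2 bound for I − Q -/
lemma row_sq_le_one {n : ℕ} {A : Matrix (Fin n) (Fin n) ℝ} (hG : IsGraph A)
    {α : ℝ} (hα : 0 < α) (hα1 : α ≤ 1) (i : Fin n) :
    ∑ j, ((if i = j then (1:ℝ) else 0) - Qmat A α i j) ^ 2 ≤ 1 := by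
  have hdi := hG.deg_pos i
  have hsdi : Real.sqrt (deg A i) ^ 2 = deg A i := Real.sq_sqrt (hG.deg_pos i).le
  have key : ∀ j, ((if i = j then (1:ℝ) else 0) - Qmat A α i j) ^ 2
      ≤ (if i = j then ((1 - α)/2)^2 else 0) + ((1 - α)/2)^2 * (A i j / deg A i) := by
    intro j
    by_cases h : i = j
    · subst h
      rw [Qmat_diag hG]
      simp [hG.loopless i]
      nlinarith [hdi]
    · have hsdj : Real.sqrt (deg A j) ^ 2 = deg A j := Real.sq_sqrt (hG.deg_pos j).le
      rw [if_neg h, if_neg h]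
      unfold Qmat
      rw [if_neg h]
      have e1 : ((0:ℝ) - ((0:ℝ) - (1 - α) / 2 * A i j / (Real.sqrt (deg A i) * Real.sqrt (deg A j))))
          = (1 - α) / 2 * A i j / (Real.sqrt (deg A i) * Real.sqrt (deg A j)) := by ring
      rw [e1, div_pow, mul_pow (Real.sqrt (deg A i)), hsdi, hsdj, mul_pow]
      rcases hG.zero_one i j with h0 | h0
      · simp [h0]
      · rw [h0, one_pow, mul_one, zero_add]
        have hc : (0:ℝ) ≤ ((1 - α) / 2) ^ 2 := sq_nonneg _
        have hdj := one_le_deg hG j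
        rw [div_le_iff₀ (by positivity)]
        have heq : ((1 - α) / 2) ^ 2 * (1 / deg A i) * (deg A i * deg A j)
            = ((1 - α) / 2) ^ 2 * deg A j := by
          field_simp
        rw [heq]
        nlinarith [hc, hdj]
  calc ∑ j, ((if i = j then (1:ℝ) else 0) - Qmat A α i j) ^ 2
      ≤ ∑ j, ((if i = j then ((1 - α)/2)^2 else 0) + ((1 - α)/2)^2 * (A i j / deg A i)) :=
        Finset.sum_le_sum (fun j _ => key j)
    _ = ((1 - α)/2)^2 + ((1 - α)/2)^2 := by
        rw [Finset.sum_add_distrib, Finset.sum_ite_eq univ i, ← Finset.mul_sum]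
        simp only [Finset.mem_univ, if_true]
        congr 1
        rw [← Finset.sum_div]
        rw [show (∑ j, A i j) = deg A i from rfl]
        field_simp
    _ ≤ 1 := by nlinarith [hα, hα1]

/-- High-degree non-activation: run FISTA (η = 1, β = (1−√α)/(1+√α),
x₋₁ = x₀ = 0) on `F_{2ρ} = f + g_B`, and suppose `R > 0` bounds `‖y_k − x_B⋆‖₂` for all `k`.
If coordinate `i` is inactive at the problem-(A) minimizer (`x_{A,i}⋆ = 0`) and
`d_i ≥ (R/(αρ))²`, then FISTA never activates node `i`. -/
theorem fista_high_degree_nonactivation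
    {n : ℕ} (A : Matrix (Fin n) (Fin n) ℝ) (hG : IsGraph A)
    (α ρ : ℝ) (hα : 0 < α) (hα1 : α ≤ 1) (hρ : 0 < ρ) (v : Fin n)
    (xA xB : Fin n → ℝ)
    (hxA : ∀ z, Freg A α v ρ xA ≤ Freg A α v ρ z)
    (hxB : ∀ z, Freg A α v (2 * ρ) xB ≤ Freg A α v (2 * ρ) z)
    -- context facts: minimizers are nonnegative and the solution path is monotone
    (hAnn : ∀ j, 0 ≤ xA j) (hBnn : ∀ j, 0 ≤ xB j) (hmono : ∀ j, xB j ≤ xA j)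
    (x y : ℕ → Fin n → ℝ) (β : ℝ)
    (hβ : β = (1 - Real.sqrt α) / (1 + Real.sqrt α))
    (hx0 : x 0 = 0) (hy0 : y 0 = 0)
    (hxs : ∀ k, x (k + 1) = softT A (2 * α * ρ) (fun i => y k i - gradf A α v (y k) i))
    (hys : ∀ k, y (k + 1) = fun i => x (k + 1) i + β * (x (k + 1) i - x k i))
    (R : ℝ) (hR : 0 < R)
    (hdist : ∀ k : ℕ, enorm2 (fun i => y k i - xB i) ≤ R)
    (i : Fin n) (hiA : xA i = 0)
    (hdeg : (R / (α * ρ)) ^ 2 ≤ deg A i) :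
    ∀ k : ℕ, x k i = 0 ∧ y k i = 0 := by
  have hxBi : xB i = 0 := le_antisymm (by rw [← hiA]; exact hmono i) (hBnn i)
  have hαρ : (0:ℝ) < α * ρ := mul_pos hα hρ
  have hsdnn : (0:ℝ) ≤ Real.sqrt (deg A i) := Real.sqrt_nonneg _
  have hRsd : R ≤ α * ρ * Real.sqrt (deg A i) := by
    have h1 : R / (α * ρ) ≤ Real.sqrt (deg A i) := by
      have h2 := Real.sqrt_le_sqrt hdeg
      rwa [Real.sqrt_sq (by positivity)] at h2
    calc R = α * ρ * (R / (α * ρ)) := by field_simp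
      _ ≤ α * ρ * Real.sqrt (deg A i) := mul_le_mul_of_nonneg_left h1 hαρ.le
  have hgA : -(α * ρ * Real.sqrt (deg A i)) ≤ gradf A α v xA i :=
    grad_lower hG hα v (fun z => hxA z) hiA
  -- gradf xA i ≤ gradf xB i
  have hBA : gradf A α v xA i ≤ gradf A α v xB i := by
    have hdiff : gradf A α v xB i - gradf A α v xA i
        = ∑ j, Qmat A α i j * (xB j - xA j) := by
      simp only [gradf, Matrix.mulVec, dotProduct, mul_sub, Finset.sum_sub_distrib]
      ring
    have hsum : 0 ≤ ∑ j, Qmat A α i j * (xB j - xA j) := by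
      apply Finset.sum_nonneg
      intro j _
      by_cases hji : j = i
      · subst hji; simp [hxBi, hiA]
      · have hq := Q_offdiag_nonpos hG hα1 (fun hh => hji hh.symm)
        have hxx : xB j - xA j ≤ 0 := by linarith [hmono j]
        nlinarith [hq, hxx]
    linarith [hdiff ▸ hsum]
  -- gradf xB i ≤ 0
  have hBnp : gradf A α v xB i ≤ 0 := by
    have h1 : (∑ j, Qmat A α i j * xB j) ≤ 0 := by
      apply Finset.sum_nonpos
      intro j _
      by_cases hji : j = i
      · subst hji; simp [hxBi]
      · exact mul_nonpos_of_nonpos_of_nonneg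
          (Q_offdiag_nonpos hG hα1 (fun hh => hji hh.symm)) (hBnn j)
    have h2 : (0:ℝ) ≤ α * (if i = v then 1 / Real.sqrt (deg A v) else 0) := by
      apply mul_nonneg hα.le
      split <;> positivity
    simp only [gradf, Matrix.mulVec, dotProduct]
    linarith
  -- per-step key
  have key : ∀ k, x (k + 1) i = 0 := by
    intro k
    have hz2 : ∑ j, (y k j - xB j) ^ 2 ≤ R ^ 2 := by
      have h := hdist k
      unfold enorm2 at h
      have h0 : (0:ℝ) ≤ ∑ j, (y k j - xB j) ^ 2 :=
        Finset.sum_nonneg fun j _ => sq_nonneg _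
      nlinarith [Real.sq_sqrt h0, Real.sqrt_nonneg (∑ j, (y k j - xB j) ^ 2)]
    have hCS : |∑ j, ((if i = j then (1:ℝ) else 0) - Qmat A α i j) * (y k j - xB j)| ≤ R := by
      have h1 := Finset.sum_mul_sq_le_sq_mul_sq univ
        (fun j => (if i = j then (1:ℝ) else 0) - Qmat A α i j) (fun j => y k j - xB j)
      have hM := row_sq_le_one hG hα hα1 i
      have h2 : (∑ j, ((if i = j then (1:ℝ) else 0) - Qmat A α i j) * (y k j - xB j)) ^ 2
          ≤ R ^ 2 := by
        apply le_trans h1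
        have h0 : (0:ℝ) ≤ ∑ j, (y k j - xB j) ^ 2 :=
          Finset.sum_nonneg fun j _ => sq_nonneg _
        nlinarith [hM, hz2, h0]
      have := Real.sqrt_le_sqrt h2
      rwa [Real.sqrt_sq_eq_abs, Real.sqrt_sq hR.le] at this
    -- identity: w = CS sum - gradf xB i
    have hexp : ∑ j, ((if i = j then (1:ℝ) else 0) - Qmat A α i j) * (y k j - xB j)
        = (y k i - xB i) - (∑ j, Qmat A α i j * y k j - ∑ j, Qmat A α i j * xB j) := by
      simp only [sub_mul, mul_sub, ite_mul, one_mul, zero_mul, Finset.sum_sub_distrib,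
        Finset.sum_ite_eq univ, Finset.mem_univ, if_true]
      ring
    have hgrad : gradf A α v (y k) i - gradf A α v xB i
        = ∑ j, Qmat A α i j * y k j - ∑ j, Qmat A α i j * xB j := by
      simp only [gradf, Matrix.mulVec, dotProduct]
      ring
    set w : ℝ := y k i - gradf A α v (y k) i with hwdef
    have hwid : w = (∑ j, ((if i = j then (1:ℝ) else 0) - Qmat A α i j) * (y k j - xB j))
        - gradf A α v xB i := by
      rw [hexp, hxBi]; linarith [hgrad, hwdef]
    have hprod : (0:ℝ) ≤ α * ρ * Real.sqrt (deg A i) := mul_nonneg hαρ.le hsdnn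
    have habs : |w| ≤ 2 * α * ρ * Real.sqrt (deg A i) := by
      rw [abs_le] at hCS ⊢
      constructor
      · rw [hwid]; nlinarith [hCS.1, hBnp, hRsd, hprod]
      · rw [hwid]; nlinarith [hCS.2, hgA, hBA, hRsd, hprod]
    rw [hxs k]
    show Real.sign w * max (|w| - 2 * α * ρ * Real.sqrt (deg A i)) 0 = 0
    rw [max_eq_right (by linarith), mul_zero]
  intro k
  induction k with
  | zero => exact ⟨by rw [hx0]; rfl, by rw [hy0]; rfl⟩
  | succ k ih =>
    refine ⟨key k, ?_⟩
    rw [hys k]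
    simp only [key k, ih.1, sub_zero, mul_zero, add_zero, zero_add, sub_self]
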